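/- arXiv:2110.01732 — 9 statements merged into one kernel-verified Lean document; each statement's English description precedes it below -/
import Mathlib

section
/- Let A' ∈ ℚ^{(n+1)×n} with rank(A') = n and with no zero row, let b' ∈ ℚ^{n+1}, and let d_1 < d_2 < … < d_{n+1} be natural numbers. For ε ∈ ℝ, let M(ε) be the (n+1)×(n+1) matrix whose first n columns are the columns of A' and whose last column is b' + (ε^{d_1}, …, ε^{d_{n+1}})^⊤. Then the set {ε ∈ ℝ : det(M(ε)) = 0} is finite. -/
open Matrix

/-- Expansion of a determinant along an updated column, via linearity (`cramer`). -/
lemma det_updateColumn_eq_sum {R : Type*} [CommRing R] {m : Type*} [DecidableEq m] [Fintype m]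
    (B : Matrix m m R) (j : m) (v : m → R) :
    (B.updateCol j v).det
      = ∑ i, v i * (B.updateCol j (Pi.single i 1)).det := by
  have hv : v = ∑ i, v i • (Pi.single i 1 : m → R) := by
    conv_lhs => rw [← Finset.univ_sum_single v]
    exact Finset.sum_congr rfl fun i _ => by rw [← Pi.single_smul, smul_eq_mul, mul_one]
  rw [← Matrix.cramer_apply]
  conv_lhs => rw [hv]
  rw [map_sum, Finset.sum_apply]
  exact Finset.sum_congr rfl fun i _ => by
    rw [LinearMap.map_smul, Pi.smul_apply, smul_eq_mul, Matrix.cramer_apply]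

/-- For `A' ∈ ℚ^{(n+1)×n}` of rank `n` with no zero row, `b' ∈ ℚ^{n+1}` and strictly
increasing natural exponents `d_1 < … < d_{n+1}`, the matrix `M(ε)` whose first `n` columns
are those of `A'` and whose last column is `b' + (ε^{d_1}, …, ε^{d_{n+1}})ᵀ` has a
determinant that vanishes for only finitely many real `ε`. -/
theorem det_perturbed_matrix_finitely_many_roots
    (n : ℕ) (A' : Matrix (Fin (n + 1)) (Fin n) ℚ) (b' : Fin (n + 1) → ℚ)
    (hrank : A'.rank = n)
    (hrow : ∀ i : Fin (n + 1), A' i ≠ 0)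
    (d : Fin (n + 1) → ℕ) (hd : StrictMono d) :
    {ε : ℝ |
      (Matrix.of fun i j : Fin (n + 1) =>
        if h : (j : ℕ) < n then ((A' i ⟨j, h⟩ : ℚ) : ℝ)
        else ((b' i : ℚ) : ℝ) + ε ^ (d i)).det = 0}.Finite := by
  classical
  set B : Matrix (Fin (n+1)) (Fin (n+1)) ℚ :=
    Matrix.of (fun i j => if h : (j : ℕ) < n then A' i ⟨j, h⟩ else 0) with hBdef
  set c : Fin (n+1) → ℚ :=
    (fun i => (B.updateCol (Fin.last n) (Pi.single i 1)).det) with hcdef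
  -- columns of A' are linearly independent
  have hli : LinearIndependent ℚ A'ᵀ := by
    apply linearIndependent_iff_card_eq_finrank_span.2
    rw [Fintype.card_fin, Set.finrank, show A'ᵀ = A'.col from rfl, ← Matrix.rank_eq_finrank_span_cols]
    exact hrank.symm
  -- find a vector outside their span
  have hspan : Submodule.span ℚ (Set.range A'ᵀ) ≠ ⊤ := by
    intro h
    have h1 : Module.finrank ℚ (Submodule.span ℚ (Set.range A'ᵀ)) = n + 1 := by
      rw [h]
      simp [Module.finrank_pi]
    have h2 : Module.finrank ℚ (Submodule.span ℚ (Set.range A'ᵀ)) = n := by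
      rw [show A'ᵀ = A'.col from rfl, ← Matrix.rank_eq_finrank_span_cols, hrank]
    omega
  obtain ⟨v, hv⟩ : ∃ v, v ∉ Submodule.span ℚ (Set.range A'ᵀ) := by
    by_contra h; push_neg at h; exact hspan (Submodule.eq_top_iff'.2 h)
  have hsnoc : LinearIndependent ℚ (Fin.snoc A'ᵀ v : Fin (n+1) → (Fin (n+1) → ℚ)) :=
    linearIndependent_fin_snoc.2 ⟨hli, hv⟩
  have hcols : (B.updateCol (Fin.last n) v)ᵀ = Fin.snoc A'ᵀ v := by
    funext j
    induction j using Fin.lastCases with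
    | last =>
      funext i
      simp [Matrix.transpose_apply, Matrix.updateCol_self]
      exact (congrFun (Fin.snoc_last (α := fun _ => Fin (n+1) → ℚ) (p := A'ᵀ) v) i).symm
    | cast j' =>
      funext i
      have hne : (j'.castSucc : Fin (n+1)) ≠ Fin.last n := (Fin.castSucc_lt_last j').ne
      have hlt : ((j'.castSucc : Fin (n+1)) : ℕ) < n := by
        simp [Fin.coe_castSucc, j'.isLt]
      simp [Matrix.transpose_apply, Matrix.updateCol_ne hne, hBdef, hlt]
      exact (congrFun (Fin.snoc_castSucc (α := fun _ => Fin (n+1) → ℚ) (p := A'ᵀ) (x := v) (i := j')) i).symm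
  have hdet : (B.updateCol (Fin.last n) v).det ≠ 0 := by
    have hu : IsUnit (B.updateCol (Fin.last n) v) := by
      apply Matrix.linearIndependent_cols_iff_isUnit.1
      rw [show (B.updateCol (Fin.last n) v).col = (B.updateCol (Fin.last n) v)ᵀ from rfl, hcols]; exact hsnoc
    exact ((Matrix.isUnit_iff_isUnit_det _).1 hu).ne_zero
  -- key: some cofactor with nonzero index is nonzero
  have hkey : ∃ i₀ : Fin (n+1), i₀ ≠ 0 ∧ c i₀ ≠ 0 := by
    by_contra h
    push_neg at h
    by_cases h0 : c 0 = 0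
    · have hall : ∀ i, c i = 0 := by
        intro i
        by_cases hi : i = 0
        · rw [hi]; exact h0
        · exact h i hi
      apply hdet
      rw [det_updateColumn_eq_sum]
      have hch : ∀ i, (B.updateCol (Fin.last n) (Pi.single i 1)).det = c i := fun i => rfl
      simp only [hch, hall, mul_zero, Finset.sum_const_zero]
    · have hzero : ∀ j : Fin n, A' 0 j = 0 := by
        intro j
        have hne : (j.castSucc : Fin (n+1)) ≠ Fin.last n := (Fin.castSucc_lt_last j).ne
        have hdup : (B.updateCol (Fin.last n) (fun i => A' i j)).det = 0 := by
          apply Matrix.det_zero_of_column_eq hne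
          intro k
          rw [Matrix.updateCol_ne hne, Matrix.updateCol_self]
          have hlt : ((j.castSucc : Fin (n+1)) : ℕ) < n := by
            simp [Fin.coe_castSucc, j.isLt]
          simp [hBdef, hlt]
        rw [det_updateColumn_eq_sum] at hdup
        have hch : ∀ i, (B.updateCol (Fin.last n) (Pi.single i 1)).det = c i := fun i => rfl
        simp only [hch] at hdup
        rw [Finset.sum_eq_single (0 : Fin (n+1))] at hdup
        · exact (mul_eq_zero.1 hdup).resolve_right h0
        · intro i _ hi
          rw [h i hi, mul_zero]
        · intro habs; exact absurd (Finset.mem_univ _) habs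
      exact hrow 0 (funext hzero)
  obtain ⟨i₀, hi₀ne, hi₀⟩ := hkey
  -- the polynomial
  set f : ℚ →+* Polynomial ℝ := (Polynomial.C : ℝ →+* Polynomial ℝ).comp (Rat.castHom ℝ) with hfdef
  have hf : ∀ q : ℚ, f q = Polynomial.C ((q : ℝ)) := fun q => rfl
  set P : Polynomial ℝ := ((B.map f).updateCol (Fin.last n)
      (fun i => f (b' i) + Polynomial.X ^ d i)).det with hPdef
  have heval : ∀ ε : ℝ, P.eval ε =
      (Matrix.of fun i j : Fin (n + 1) =>
        if h : (j : ℕ) < n then ((A' i ⟨j, h⟩ : ℚ) : ℝ)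
        else ((b' i : ℚ) : ℝ) + ε ^ (d i)).det := by
    intro ε
    rw [hPdef, ← Polynomial.coe_evalRingHom, RingHom.map_det]
    congr 1
    ext i j
    by_cases hj : (j : ℕ) < n
    · have hjne : j ≠ Fin.last n := by
        intro h
        rw [h] at hj
        simp [Fin.last] at hj
      simp [Matrix.map_apply, Matrix.updateCol_ne hjne, hBdef, hj, hf]
    · have hjeq : j = Fin.last n := by
        have := j.isLt
        apply Fin.ext
        simp only [Fin.val_last]
        omega
      subst hjeq
      simp [Matrix.map_apply, Matrix.updateCol_self, hf, hj]
  -- cofactors of the polynomial matrix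
  have hsingle : ∀ i, ((B.map f).updateCol (Fin.last n) (Pi.single i 1)).det = f (c i) := by
    intro i
    rw [hcdef, RingHom.map_det, RingHom.mapMatrix_apply, Matrix.map_updateCol]
    have hcol : (⇑f ∘ (Pi.single i 1 : Fin (n+1) → ℚ))
        = (Pi.single i 1 : Fin (n+1) → Polynomial ℝ) := by
      funext k
      simp only [Function.comp_apply]
      rcases eq_or_ne k i with h|h
      · subst h; simp
      · simp [Pi.single_eq_of_ne h]
    rw [hcol]
  have hP : P = ∑ i, (f (b' i) + Polynomial.X ^ d i) * f (c i) := by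
    rw [hPdef, det_updateColumn_eq_sum]
    exact Finset.sum_congr rfl fun i _ => by rw [hsingle]
  have hdpos : 0 < d i₀ := by
    have : (0 : Fin (n+1)) < i₀ := Fin.pos_of_ne_zero hi₀ne
    have := hd this
    omega
  have hcoeff : P.coeff (d i₀) = ((c i₀ : ℚ) : ℝ) := by
    rw [hP, Polynomial.finset_sum_coeff, Finset.sum_eq_single i₀]
    · rw [hf, hf, add_mul, ← Polynomial.C_mul, Polynomial.coeff_add, Polynomial.coeff_C,
        if_neg hdpos.ne', mul_comm (Polynomial.X ^ d i₀), Polynomial.coeff_C_mul,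
        Polynomial.coeff_X_pow, if_pos rfl, mul_one, zero_add]
    · intro i _ hi
      have hdne : d i₀ ≠ d i := fun h => hi (hd.injective h.symm)
      rw [hf, hf, add_mul, ← Polynomial.C_mul, Polynomial.coeff_add, Polynomial.coeff_C,
        if_neg hdpos.ne', mul_comm (Polynomial.X ^ d i), Polynomial.coeff_C_mul,
        Polynomial.coeff_X_pow, if_neg hdne, mul_zero, zero_add]
    · intro habs; exact absurd (Finset.mem_univ _) habs
  have hPne : P ≠ 0 := by
    intro h
    rw [h, Polynomial.coeff_zero] at hcoeff
    exact hi₀ (by exact_mod_cast hcoeff.symm)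
  refine Set.Finite.subset (Polynomial.finite_setOf_isRoot hPne) ?_
  intro ε hε
  simp only [Set.mem_setOf_eq] at hε ⊢
  rw [Polynomial.IsRoot, heval ε]
  exact hε
end

section
/- Let A ∈ ℝ^{(n+m)×n} and b ∈ ℝ^{n+m}. Then the polyhedron 𝒫(A,b) has at most binom(n+m, n) vertices; that is, the set of extreme points of {x ∈ ℝ^n : A x ≤ b} has cardinality at most binom(n+m, n). -/
open Set Submodule Module Filter Matrix Topology

/-- Uniqueness: if the rows of `A` indexed by an `n`-element set `J` are linearly independent,
then `A_J x = b_J` has at most one solution. -/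
lemma unique_sol {n m : ℕ} (A : Matrix (Fin (n + m)) (Fin n) ℝ) (b : Fin (n + m) → ℝ)
    (J : Finset (Fin (n + m))) (hJ : J.card = n)
    (hind : LinearIndependent ℝ (fun i : J => A i))
    {x y : Fin n → ℝ} (hx : ∀ i ∈ J, A.mulVec x i = b i) (hy : ∀ i ∈ J, A.mulVec y i = b i) :
    x = y := by
  have hspan : span ℝ (Set.range fun i : J => A i) = ⊤ := by
    apply hind.span_eq_top_of_card_eq_finrank'
    simp [hJ, Module.finrank_fin_fun]
  have hdot : ∀ v ∈ span ℝ (Set.range fun i : J => A i), v ⬝ᵥ (x - y) = 0 := by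
    intro v hv
    induction hv using Submodule.span_induction with
    | mem v hv =>
      obtain ⟨i, rfl⟩ := hv
      have h1 := hx i i.2
      have h2 := hy i i.2
      simp only [Matrix.mulVec, dotProduct] at h1 h2 ⊢
      simp only [Pi.sub_apply, mul_sub, Finset.sum_sub_distrib, h1, h2, sub_self]
    | zero => simp
    | add v w _ _ hv hw => simp only [add_dotProduct, dotProduct_sub] at hv hw ⊢; linarith
    | smul c v _ hv => simp only [smul_dotProduct, dotProduct_sub, smul_eq_mul] at hv ⊢; linear_combination c * hv
  funext j
  have h0 := hdot (Pi.single j 1) (by rw [hspan]; trivial)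
  have : x j - y j = 0 := by
    simpa [dotProduct, Pi.single_apply] using h0
  linarith

/-- At an extreme point, the tight rows span everything. -/
lemma tight_span {n m : ℕ} (A : Matrix (Fin (n + m)) (Fin n) ℝ) (b : Fin (n + m) → ℝ)
    {x : Fin n → ℝ} (hx : x ∈ Set.extremePoints ℝ {x : Fin n → ℝ | A.mulVec x ≤ b}) :
    span ℝ (A '' {i | A.mulVec x i = b i}) = ⊤ := by
  by_contra hne
  obtain ⟨φ, hφ0, hφ⟩ := Submodule.exists_dual_map_eq_bot_of_lt_top
    (lt_top_iff_ne_top.mpr hne) inferInstance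
  set I : Set (Fin (n + m)) := {i | A.mulVec x i = b i} with hI
  set d : Fin n → ℝ := fun j => φ (Pi.single j 1) with hd
  have hφeq : ∀ v : Fin n → ℝ, φ v = v ⬝ᵥ d := by
    intro v
    conv_lhs => rw [← Finset.univ_sum_single v]
    rw [map_sum]
    congr 1
    funext j
    have : (Pi.single j (v j) : Fin n → ℝ) = (v j) • (Pi.single j (1:ℝ) : Fin n → ℝ) := by
      ext k; by_cases h : k = j <;> simp [Pi.single_apply, h]
    rw [this, _root_.map_smul]
    simp [dotProduct, hd, Pi.single_apply, mul_comm]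
  have hdne : d ≠ 0 := by
    intro h
    apply hφ0
    ext v
    simp [hφeq, h]
  have hzero : ∀ i ∈ I, A.mulVec d i = 0 := by
    intro i hi
    have : A i ∈ span ℝ (A '' I) := Submodule.subset_span ⟨i, hi, rfl⟩
    have := hφ ▸ Submodule.mem_map_of_mem (f := φ) this
    simpa [Matrix.mulVec, ← hφeq] using (Submodule.mem_bot ℝ).mp this
  have hxP : A.mulVec x ≤ b := hx.1
  have key : ∀ i : Fin (n + m), ∀ᶠ ε in 𝓝[>] (0:ℝ),
      A.mulVec (x + ε • d) i ≤ b i ∧ A.mulVec (x - ε • d) i ≤ b i := by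
    intro i
    by_cases hi : A.mulVec x i = b i
    · filter_upwards with ε
      have h0 := hzero i hi
      constructor <;>
        simp [Matrix.mulVec_add, Matrix.mulVec_sub, Matrix.mulVec_smul, h0, hi]
    · have hlt : A.mulVec x i < b i := lt_of_le_of_ne (hxP i) hi
      have hc : ∀ s : ℝ, Filter.Tendsto (fun ε : ℝ => A.mulVec x i + ε * s * A.mulVec d i)
          (𝓝[>] 0) (𝓝 (A.mulVec x i)) := by
        intro s
        have : Continuous fun ε : ℝ => A.mulVec x i + ε * s * A.mulVec d i := continuous_const.add ((continuous_id.mul continuous_const).mul continuous_const)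
        have h := this.tendsto 0
        simp only [zero_mul, mul_zero, add_zero] at h
        exact h.mono_left nhdsWithin_le_nhds
      have h1 := (hc 1).eventually_lt_const hlt
      have h2 := (hc (-1)).eventually_lt_const hlt
      filter_upwards [h1, h2] with ε he1 he2
      constructor
      · have : A.mulVec (x + ε • d) i = A.mulVec x i + ε * 1 * A.mulVec d i := by
          simp [Matrix.mulVec_add, Matrix.mulVec_smul]
        rw [this]; exact le_of_lt he1
      · have : A.mulVec (x - ε • d) i = A.mulVec x i + ε * (-1) * A.mulVec d i := by
          simp [Matrix.mulVec_sub, Matrix.mulVec_smul]; ring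
        rw [this]; exact le_of_lt he2
  have hall : ∀ᶠ ε in 𝓝[>] (0:ℝ), (∀ i, A.mulVec (x + ε • d) i ≤ b i ∧
      A.mulVec (x - ε • d) i ≤ b i) ∧ ε ∈ Set.Ioi (0:ℝ) :=
    (Filter.eventually_all.mpr key).and (eventually_mem_nhdsWithin)
  obtain ⟨ε, hε, hεpos⟩ := hall.exists
  have hεpos : (0:ℝ) < ε := hεpos
  have hmem1 : x + ε • d ∈ {x : Fin n → ℝ | A.mulVec x ≤ b} := fun i => (hε i).1
  have hmem2 : x - ε • d ∈ {x : Fin n → ℝ | A.mulVec x ≤ b} := fun i => (hε i).2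
  have hseg : x ∈ openSegment ℝ (x - ε • d) (x + ε • d) := by
    refine ⟨1/2, 1/2, by norm_num, by norm_num, by norm_num, ?_⟩
    module
  have h1 : x - ε • d = x := (hx.2 hmem2 hmem1 hseg)
  have h2 : ε • d = 0 := sub_eq_self.mp h1
  rcases smul_eq_zero.mp h2 with h | h
  · exact hεpos.ne' h
  · exact hdne h

lemma exists_tight_basis {n m : ℕ} (A : Matrix (Fin (n + m)) (Fin n) ℝ) (b : Fin (n + m) → ℝ)
    {x : Fin n → ℝ} (hx : x ∈ Set.extremePoints ℝ {x : Fin n → ℝ | A.mulVec x ≤ b}) :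
    ∃ J : Finset (Fin (n + m)), J.card = n ∧ LinearIndependent ℝ (fun i : J => A i) ∧
      ∀ i ∈ J, A.mulVec x i = b i := by
  classical
  have hspan := tight_span A b hx
  set I : Set (Fin (n + m)) := {i | A.mulVec x i = b i} with hI
  obtain ⟨T, hTsub, hTspan, hTind⟩ := exists_linearIndependent ℝ (A '' I)
  rw [hspan] at hTspan
  have hTfin : T.Finite := hTind.finite
  haveI := hTfin.fintype
  let B : Basis T ℝ (Fin n → ℝ) := Basis.mk hTind (by rw [Subtype.range_coe, hTspan])
  have hcard : Fintype.card T = n := by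
    rw [← Module.finrank_eq_card_basis B, Module.finrank_fin_fun]
  have hrep : ∀ t : T, ∃ i, i ∈ I ∧ A i = (t : Fin n → ℝ) := fun t => hTsub t.2
  choose g hgI hgA using hrep
  have hginj : Function.Injective g := fun t t' h =>
    Subtype.ext (by rw [← hgA t, ← hgA t', h])
  set J : Finset (Fin (n + m)) := Finset.univ.image g with hJdef
  refine ⟨J, ?_, ?_, ?_⟩
  · rw [hJdef, Finset.card_image_of_injective _ hginj, Finset.card_univ, hcard]
  · have hmem : ∀ i : J, A i ∈ T := by
      rintro ⟨i, hi⟩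
      obtain ⟨t, -, rfl⟩ := Finset.mem_image.mp hi
      rw [hgA t]; exact t.2
    let e : J → T := fun i => ⟨A i, hmem i⟩
    have he : Function.Injective e := by
      rintro ⟨i, hi⟩ ⟨i', hi'⟩ h
      obtain ⟨t, -, rfl⟩ := Finset.mem_image.mp hi
      obtain ⟨t', -, rfl⟩ := Finset.mem_image.mp hi'
      have h' : A (g t) = A (g t') := congrArg Subtype.val h
      rw [hgA t, hgA t'] at h'
      exact Subtype.ext (congrArg g (Subtype.ext h'))
    exact hTind.comp e he
  · intro i hi
    obtain ⟨t, -, rfl⟩ := Finset.mem_image.mp hi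
    exact hgI t

/-- A polyhedron `{x ∈ ℝ^n : A x ≤ b}` defined by `n + m` inequalities has at most
`binom(n+m, n)` vertices (extreme points). -/
theorem polyhedron_vertices_card_le_choose
    (n m : ℕ) (A : Matrix (Fin (n + m)) (Fin n) ℝ) (b : Fin (n + m) → ℝ) :
    (Set.extremePoints ℝ {x : Fin n → ℝ | A.mulVec x ≤ b}).encard
      ≤ ((n + m).choose n : ℕ∞) := by
  classical
  set E := Set.extremePoints ℝ {x : Fin n → ℝ | A.mulVec x ≤ b} with hE
  let f : (Fin n → ℝ) → Finset (Fin (n + m)) := fun x =>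
    if h : x ∈ E then (exists_tight_basis A b h).choose else ∅
  have hf : ∀ x, ∀ h : x ∈ E, (f x).card = n ∧
      LinearIndependent ℝ (fun i : (f x : Finset (Fin (n + m))) => A i) ∧
      ∀ i ∈ f x, A.mulVec x i = b i := by
    intro x h
    have hfx : f x = (exists_tight_basis A b h).choose := dif_pos h
    rw [hfx]
    exact (exists_tight_basis A b h).choose_spec
  have hinj : Set.InjOn f E := by
    intro x hxE y hyE hxy
    obtain ⟨hc, hind, hx⟩ := hf x hxE
    obtain ⟨-, -, hy⟩ := hf y hyE
    exact unique_sol A b (f x) hc hind hx (by rw [hxy]; exact hy)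
  have hsub : f '' E ⊆ {s : Finset (Fin (n + m)) | s.card = n} := by
    rintro - ⟨x, hx, rfl⟩
    exact (hf x hx).1
  have hset : {s : Finset (Fin (n + m)) | s.card = n} =
      ↑((Finset.univ : Finset (Fin (n + m))).powersetCard n) := by
    ext s; simp [Finset.mem_powersetCard]
  calc E.encard = (f '' E).encard := (hinj.encard_image).symm
    _ ≤ ({s : Finset (Fin (n + m)) | s.card = n}).encard := Set.encard_mono hsub
    _ = ((n + m).choose n : ℕ∞) := by
        rw [hset, Set.encard_coe_eq_coe_finsetCard, Finset.card_powersetCard,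
          Finset.card_univ, Fintype.card_fin]
end

section
/- Let G be a finite abelian group (written additively), let g_1, …, g_k ∈ G (k ≥ 1), let g_0 ∈ G, and let r be the order of g_k in G. Let G_{k−1}(g), for g ∈ G, denote the formal power series over ℤ in variables X_1, …, X_k whose coefficient at X^x (x ∈ ℕ^k) equals 1 if x_k = 0 and Σ_{i=1}^{k−1} x_i·g_i = g, and 0 otherwise. Then, as formal power series, (1 − X_k^r) · F_k(g_0) = Σ_{i=0}^{r−1} X_k^i · G_{k−1}(g_0 − i·g_k). -/
/-- Recurrence for the generating function of a group system: with `k = n + 1 ≥ 1`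
group elements `g_1, …, g_k`, `r` the order of `g_k`, `F_k(a)` the power series whose
coefficient at `X^x` is `1` iff `Σ_i x_i • g_i = a`, and `G_{k-1}(a)` the power series whose
coefficient at `X^x` is `1` iff `x_k = 0` and `Σ_{i<k} x_i • g_i = a`, one has
`(1 - X_k^r) · F_k(g_0) = Σ_{i=0}^{r-1} X_k^i · G_{k-1}(g_0 - i·g_k)`. -/
theorem group_generating_function_recurrence
    (n : ℕ) (G : Type*) [AddCommGroup G] [Fintype G] [DecidableEq G]
    (g : Fin (n + 1) → G) (g0 : G)
    (F Gm : G → MvPowerSeries (Fin (n + 1)) ℤ)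
    (hF : ∀ (a : G) (x : Fin (n + 1) →₀ ℕ),
      MvPowerSeries.coeff x (F a) = if (∑ i, x i • g i) = a then 1 else 0)
    (hG : ∀ (a : G) (x : Fin (n + 1) →₀ ℕ),
      MvPowerSeries.coeff x (Gm a) =
        if x (Fin.last n) = 0 ∧ (∑ i : Fin n, x i.castSucc • g i.castSucc) = a then 1
        else 0) :
    (1 - MvPowerSeries.X (Fin.last n) ^ addOrderOf (g (Fin.last n))) * F g0 =
      ∑ i ∈ Finset.range (addOrderOf (g (Fin.last n))),
        MvPowerSeries.X (Fin.last n) ^ i * Gm (g0 - i • g (Fin.last n)) := by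
  classical
  set r := addOrderOf (g (Fin.last n)) with hr
  apply MvPowerSeries.ext fun x => ?_
  have hsplit : ∀ y : Fin (n+1) →₀ ℕ, (∑ i, y i • g i)
      = (∑ i : Fin n, y i.castSucc • g i.castSucc) + y (Fin.last n) • g (Fin.last n) :=
    fun y => Fin.sum_univ_castSucc (fun i => y i • g i)
  -- RHS terms
  have hterm : ∀ i,
      MvPowerSeries.coeff x (MvPowerSeries.X (Fin.last n) ^ i * Gm (g0 - i • g (Fin.last n)))
        = if x (Fin.last n) = i ∧ (∑ j : Fin n, x j.castSucc • g j.castSucc)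
            = g0 - i • g (Fin.last n) then 1 else 0 := by
    intro i
    rw [MvPowerSeries.X_pow_eq, MvPowerSeries.coeff_monomial_mul]
    by_cases h : Finsupp.single (Fin.last n) i ≤ x
    · have hle : i ≤ x (Fin.last n) := by
        simpa using (Finsupp.single_le_iff).mp h
      have h1 : (x - Finsupp.single (Fin.last n) i) (Fin.last n) = x (Fin.last n) - i := by
        simp [Finsupp.sub_apply]
      have h2 : ∀ j : Fin n, (x - Finsupp.single (Fin.last n) i) j.castSucc = x j.castSucc := by
        intro j
        simp [Finsupp.sub_apply, Finsupp.single_apply, (Fin.castSucc_lt_last j).ne']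
      rw [if_pos h, one_mul, hG]
      simp only [h1, h2]
      refine if_congr ?_ rfl rfl
      constructor
      · rintro ⟨h3, h4⟩
        exact ⟨by omega, h4⟩
      · rintro ⟨h3, h4⟩
        exact ⟨by omega, h4⟩
    · rw [if_neg h]
      have : ¬ (x (Fin.last n) = i ∧ (∑ j : Fin n, x j.castSucc • g j.castSucc)
          = g0 - i • g (Fin.last n)) := by
        rintro ⟨h3, -⟩
        exact h (Finsupp.single_le_iff.mpr (by omega))
      rw [if_neg this]
  rw [map_sum, sub_mul, one_mul, map_sub, MvPowerSeries.X_pow_eq,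
    MvPowerSeries.coeff_monomial_mul, hF, Finset.sum_congr rfl fun i _ => hterm i]
  by_cases hcase : x (Fin.last n) < r
  · -- LHS monomial part vanishes
    have hnot : ¬ Finsupp.single (Fin.last n) r ≤ x := by
      intro h
      have := Finsupp.single_le_iff.mp h
      omega
    rw [if_neg hnot, sub_zero]
    rw [Finset.sum_eq_single (x (Fin.last n))]
    · rw [hsplit x]
      simp only [if_pos rfl, true_and] -- careful
      refine if_congr ?_ rfl rfl
      rw [eq_sub_iff_add_eq]
    · intro b _ hb
      rw [if_neg]
      rintro ⟨h3, -⟩; exact hb h3.symm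
    · intro hmem
      exact absurd (Finset.mem_range.mpr hcase) hmem
  · -- x last ≥ r : LHS is difference of equal things; RHS all terms vanish
    push_neg at hcase
    have hpos : Finsupp.single (Fin.last n) r ≤ x :=
      Finsupp.single_le_iff.mpr hcase
    rw [if_pos hpos, one_mul, hF]
    have hsum : (∑ i, (x - Finsupp.single (Fin.last n) r) i • g i) = ∑ i, x i • g i := by
      rw [hsplit, hsplit x]
      have h1 : (x - Finsupp.single (Fin.last n) r) (Fin.last n) = x (Fin.last n) - r := by
        simp [Finsupp.sub_apply]
      have h2 : ∀ j : Fin n, (x - Finsupp.single (Fin.last n) r) j.castSucc = x j.castSucc := by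
        intro j
        simp [Finsupp.sub_apply, Finsupp.single_apply, (Fin.castSucc_lt_last j).ne']
      simp only [h1, h2]
      congr 1
      have heq : x (Fin.last n) = (x (Fin.last n) - r) + r := by omega
      conv_rhs => rw [heq]
      rw [add_nsmul, hr, addOrderOf_nsmul_eq_zero, add_zero]
    rw [hsum, sub_self]
    symm
    apply Finset.sum_eq_zero
    intro i hi
    rw [if_neg]
    rintro ⟨h3, -⟩
    rw [Finset.mem_range] at hi
    omega
end

section
/- Let G be a finite abelian group (written additively), let g_1, …, g_k ∈ G, let g_0 ∈ G, and let r_i be the order of g_i for i = 1, …, k. Then, as formal power series over ℤ in X_1, …, X_k, the product (∏_{i=1}^k (1 − X_i^{r_i})) · F_k(g_0) equals the polynomial Σ_z X^z, where the sum ranges over all z ∈ ℕ^k with z_i < r_i for every i and Σ_{i=1}^k z_i·g_i = g_0. In particular, this product is a polynomial all of whose coefficients lie in {0, 1} and whose degree in X_i is at most r_i − 1. -/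
open MvPowerSeries Finsupp

lemma coeff_X_pow_mul' {σ R : Type*} [Semiring R] (s : σ) (n : ℕ)
    (φ : MvPowerSeries σ R) (m : σ →₀ ℕ) :
    MvPowerSeries.coeff m ((MvPowerSeries.X s) ^ n * φ) =
      if Finsupp.single s n ≤ m then MvPowerSeries.coeff (m - Finsupp.single s n) φ else 0 := by
  rw [MvPowerSeries.X_pow_eq, MvPowerSeries.coeff_monomial_mul]
  split_ifs <;> simp

/-- Closed form of the group generating function: with `r_i` the order of `g_i`, the
product `(∏_i (1 - X_i^{r_i})) · F_k(g_0)` is the polynomial `Σ_z X^z`, summed over all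
`z ∈ ℕ^k` with `z_i < r_i` for every `i` and `Σ_i z_i • g_i = g_0`; in particular its
coefficients lie in `{0,1}` and its degree in `X_i` is at most `r_i - 1`.  This is
expressed coefficientwise. -/
theorem group_generating_function_closed_form
    (k : ℕ) (G : Type*) [AddCommGroup G] [Fintype G] [DecidableEq G]
    (g : Fin k → G) (g0 : G)
    (F : G → MvPowerSeries (Fin k) ℤ)
    (hF : ∀ (a : G) (x : Fin k →₀ ℕ),
      MvPowerSeries.coeff x (F a) = if (∑ i, x i • g i) = a then 1 else 0) :
    ∀ x : Fin k →₀ ℕ,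
      MvPowerSeries.coeff x
          ((∏ i, (1 - MvPowerSeries.X i ^ addOrderOf (g i))) * F g0) =
        if (∀ i, x i < addOrderOf (g i)) ∧ (∑ i, x i • g i = g0) then 1 else 0 := by
  suffices h : ∀ (S : Finset (Fin k)) (x : Fin k →₀ ℕ),
      MvPowerSeries.coeff x
          ((∏ i ∈ S, (1 - MvPowerSeries.X i ^ addOrderOf (g i))) * F g0) =
        if (∀ i ∈ S, x i < addOrderOf (g i)) ∧ (∑ i, x i • g i = g0) then 1 else 0 by
    intro x
    rw [h Finset.univ x]
    simp
  intro S
  induction S using Finset.induction with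
  | empty => intro x; simpa using hF g0 x
  | @insert j S hj ih =>
    intro x
    rw [Finset.prod_insert hj, mul_assoc, sub_mul, one_mul, map_sub, ih,
      coeff_X_pow_mul']
    set r := addOrderOf (g j) with hr
    have hrpos : 0 < r := addOrderOf_pos (g j)
    by_cases hle : Finsupp.single j r ≤ x
    · rw [if_pos hle, ih]
      have hxr : r ≤ x j := by simpa using hle j
      have key1 : ∀ i, (x - Finsupp.single j r) i = if i = j then x j - r else x i := by
        intro i
        by_cases h : i = j
        · subst h; simp [Finsupp.tsub_apply]
        · simp [Finsupp.tsub_apply, Finsupp.single_apply, h, Ne.symm h]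
      have hsum : (∑ i, (x - Finsupp.single j r) i • g i) = ∑ i, x i • g i := by
        rw [← Finset.sum_compl_add_sum {j}, ← Finset.sum_compl_add_sum {j} (f := fun i => x i • g i)]
        congr 1
        · apply Finset.sum_congr rfl
          intro i hi
          simp only [Finset.mem_compl, Finset.mem_singleton] at hi
          rw [key1, if_neg hi]
        · simp only [Finset.sum_singleton, key1, if_pos rfl]
          have : x j = (x j - r) + r := (Nat.sub_add_cancel hxr).symm
          rw [this, add_smul]
          simp [hr, addOrderOf_nsmul_eq_zero]
      have hcond : (∀ i ∈ S, (x - Finsupp.single j r) i < addOrderOf (g i)) ↔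
          (∀ i ∈ S, x i < addOrderOf (g i)) := by
        refine forall₂_congr fun i hi => ?_
        rw [key1, if_neg (by rintro rfl; exact hj hi)]
      rw [hsum]
      have : ((∀ i ∈ S, (x - Finsupp.single j r) i < addOrderOf (g i)) ∧
          (∑ i, x i • g i = g0)) ↔ ((∀ i ∈ S, x i < addOrderOf (g i)) ∧ (∑ i, x i • g i = g0)) := by
        rw [hcond]
      rw [if_congr this rfl rfl, sub_self]
      have hnot : ¬ (∀ i ∈ insert j S, x i < addOrderOf (g i)) := by
        intro h
        exact absurd (h j (Finset.mem_insert_self j S)) (by omega)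
      rw [if_neg (fun hc => hnot hc.1)]
    · rw [if_neg hle, sub_zero]
      have hxr : x j < r := by
        by_contra h
        apply hle
        intro i
        rw [Finsupp.single_apply]
        split_ifs with hij
        · subst hij; omega
        · omega
      have : ((∀ i ∈ S, x i < addOrderOf (g i)) ∧ (∑ i, x i • g i = g0)) ↔
          ((∀ i ∈ insert j S, x i < addOrderOf (g i)) ∧ (∑ i, x i • g i = g0)) := by
        constructor
        · rintro ⟨h1, h2⟩
          exact ⟨fun i hi => (Finset.mem_insert.mp hi).elim (fun h => h ▸ hxr) (h1 i), h2⟩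
        · rintro ⟨h1, h2⟩
          exact ⟨fun i hi => h1 i (Finset.mem_insert_of_mem hi), h2⟩
      rw [if_congr this rfl rfl]
end

section
/- Let A ∈ ℤ^{n×n} with det(A) ≠ 0, let b ∈ ℤ^n, and let P, Q ∈ ℤ^{n×n} be unimodular matrices (|det P| = |det Q| = 1) such that S = P A Q is diagonal with positive diagonal entries. Then the map y ↦ A^{-1}(b − y) is a bijection from the set {y ∈ ℤ^n : y ≥ 0 and P(b − y) ∈ S·ℤ^n} onto the set {x ∈ ℤ^n : A x ≤ b}. -/
lemma cast_mulVec_aux (n : ℕ) (M : Matrix (Fin n) (Fin n) ℤ) (v : Fin n → ℤ) :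
    (M.map (Int.cast : ℤ → ℚ)).mulVec (fun i => ((v i : ℤ) : ℚ))
      = fun i => ((M.mulVec v i : ℤ) : ℚ) := by
  funext i
  simp [Matrix.mulVec, dotProduct, Matrix.map]

/-- Let `S = P A Q` be a Smith-normal-form-like decomposition of a nonsingular integer
matrix `A` (with `P`, `Q` unimodular and `S` diagonal with positive diagonal).  Then
`y ↦ A⁻¹(b − y)` is a bijection from `{y ∈ ℤ^n : y ≥ 0, P(b − y) ∈ S·ℤ^n}` onto
`{x ∈ ℤ^n : A x ≤ b}` (viewed inside `ℚ^n`; in particular the image is integral). -/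
theorem group_polyhedron_bijection
    (n : ℕ) (A P Q : Matrix (Fin n) (Fin n) ℤ) (b : Fin n → ℤ)
    (hA : A.det ≠ 0) (hP : IsUnit P.det) (hQ : IsUnit Q.det)
    (hdiag : (P * A * Q).IsDiag) (hpos : ∀ i, 0 < (P * A * Q) i i) :
    Set.BijOn
      (fun y : Fin n → ℤ =>
        (A.map (Int.cast : ℤ → ℚ))⁻¹.mulVec fun i => ((b i - y i : ℤ) : ℚ))
      {y : Fin n → ℤ | 0 ≤ y ∧ ∃ z : Fin n → ℤ, P.mulVec (b - y) = (P * A * Q).mulVec z}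
      ((fun x : Fin n → ℤ => fun i => ((x i : ℤ) : ℚ)) '' {x : Fin n → ℤ | A.mulVec x ≤ b}) := by
  set A' : Matrix (Fin n) (Fin n) ℚ := A.map (Int.cast : ℤ → ℚ) with hA'
  have hdetA' : IsUnit A'.det := by
    have h := RingHom.map_det (Int.castRingHom ℚ) A
    rw [RingHom.mapMatrix_apply] at h
    simp only [Int.coe_castRingHom] at h
    rw [hA', ← h]
    exact isUnit_iff_ne_zero.2 (by exact_mod_cast hA)
  have hAinv : ∀ v : Fin n → ℚ, A'⁻¹.mulVec (A'.mulVec v) = v := by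
    intro v
    rw [Matrix.mulVec_mulVec, Matrix.nonsing_inv_mul _ hdetA', Matrix.one_mulVec]
  have hAinv2 : ∀ v : Fin n → ℚ, A'.mulVec (A'⁻¹.mulVec v) = v := by
    intro v
    rw [Matrix.mulVec_mulVec, Matrix.mul_nonsing_inv _ hdetA', Matrix.one_mulVec]
  have key : ∀ x : Fin n → ℤ,
      A'⁻¹.mulVec (fun i => ((b i - (b - A.mulVec x) i : ℤ) : ℚ)) = fun i => ((x i : ℤ) : ℚ) := by
    intro x
    have : (fun i => ((b i - (b - A.mulVec x) i : ℤ) : ℚ))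
        = A'.mulVec (fun i => ((x i : ℤ) : ℚ)) := by
      rw [hA', cast_mulVec_aux]
      funext i; simp
    rw [this, hAinv]
  constructor
  · -- maps to
    rintro y ⟨hy0, z, hz⟩
    have hz' : P.mulVec (b - y) = P.mulVec (A.mulVec (Q.mulVec z)) := by
      rw [hz]
      simp only [Matrix.mulVec_mulVec, Matrix.mul_assoc]
    have hby : b - y = (A * Q).mulVec z := by
      have h1 := congrArg (P⁻¹.mulVec) hz'
      simp only [Matrix.mulVec_mulVec, ← Matrix.mul_assoc, Matrix.nonsing_inv_mul _ hP,
        one_mul, Matrix.one_mulVec] at h1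
      exact h1
    set x := Q.mulVec z with hx
    have hAx : A.mulVec x = b - y := by
      rw [hx, Matrix.mulVec_mulVec]; exact hby.symm
    have hy : y = b - A.mulVec x := by rw [hAx]; abel
    refine ⟨x, ?_, ?_⟩
    · intro i
      have h0 : (0 : ℤ) ≤ y i := hy0 i
      have h1 : A.mulVec x i = b i - y i := by rw [hAx]; simp
      show A.mulVec x i ≤ b i
      omega
    · have h2 := key x
      rw [← hy] at h2
      exact h2.symm
  constructor
  · -- injective
    rintro y₁ - y₂ - h
    have h' : (A'⁻¹.mulVec fun i => ((b i - y₁ i : ℤ) : ℚ))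
        = A'⁻¹.mulVec fun i => ((b i - y₂ i : ℤ) : ℚ) := h
    have h2 := congrArg A'.mulVec h'
    rw [hAinv2, hAinv2] at h2
    funext i
    have h3 : ((b i - y₁ i : ℤ) : ℚ) = ((b i - y₂ i : ℤ) : ℚ) := congrFun h2 i
    have h4 : (b i - y₁ i : ℤ) = (b i - y₂ i : ℤ) := by exact_mod_cast h3
    omega
  · -- surjective
    rintro x' ⟨x, hx, rfl⟩
    have : Invertible Q := Q.invertibleOfIsUnitDet hQ
    have hQQ : Q.mulVec (Q⁻¹.mulVec x) = x := by
      rw [Matrix.mulVec_mulVec, Matrix.mul_nonsing_inv _ hQ, Matrix.one_mulVec]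
    refine ⟨b - A.mulVec x, ⟨?_, ⟨Q⁻¹.mulVec x, ?_⟩⟩, key x⟩
    · intro i
      have h1 : A.mulVec x i ≤ b i := hx i
      show (0 : ℤ) ≤ b i - A.mulVec x i
      omega
    · rw [show b - (b - A.mulVec x) = A.mulVec x from by abel]
      conv_lhs => rw [← hQQ]
      simp only [Matrix.mulVec_mulVec, ← Matrix.mul_assoc]
end

section
/- Let A ∈ ℤ^{n×n} with det(A) ≠ 0, and let P, Q ∈ ℤ^{n×n} be unimodular matrices (|det P| = |det Q| = 1) such that S = P A Q is diagonal with positive diagonal entries. Let b, b' ∈ ℤ^n satisfy P(b − b') ∈ S·ℤ^n. Then w := A^{-1}(b − b') is an integer vector, and the translation x ↦ x − w is a bijection from {x ∈ ℤ^n : A x ≤ b} onto {x ∈ ℤ^n : A x ≤ b'}. -/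
/-- With `S = P A Q` diagonal (P, Q unimodular, positive diagonal), if
`P(b − b') ∈ S·ℤ^n`, then `w := A⁻¹(b − b')` is an integer vector and `x ↦ x − w` is a
bijection from `{x ∈ ℤ^n : A x ≤ b}` onto `{x ∈ ℤ^n : A x ≤ b'}`. -/
theorem congruent_rhs_translation_bijection
    (n : ℕ) (A P Q : Matrix (Fin n) (Fin n) ℤ) (b b' : Fin n → ℤ)
    (hA : A.det ≠ 0) (hP : IsUnit P.det) (hQ : IsUnit Q.det)
    (hdiag : (P * A * Q).IsDiag) (hpos : ∀ i, 0 < (P * A * Q) i i)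
    (hcong : ∃ z : Fin n → ℤ, P.mulVec (b - b') = (P * A * Q).mulVec z) :
    ∃ w : Fin n → ℤ,
      (∀ j : Fin n,
        (w j : ℚ) = (A.map (Int.cast : ℤ → ℚ))⁻¹.mulVec (fun i => ((b i - b' i : ℤ) : ℚ)) j) ∧
      Set.BijOn (fun x : Fin n → ℤ => x - w)
        {x : Fin n → ℤ | A.mulVec x ≤ b} {x : Fin n → ℤ | A.mulVec x ≤ b'} := by
  obtain ⟨z, hz⟩ := hcong
  have hPinv : Invertible P := P.invertibleOfIsUnitDet hP
  set w : Fin n → ℤ := Q.mulVec z with hw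
  have hAw : A.mulVec w = b - b' := by
    have h1 : P.mulVec (b - b') = P.mulVec (A.mulVec (Q.mulVec z)) := by
      rw [hz, Matrix.mulVec_mulVec, Matrix.mulVec_mulVec, mul_assoc]
    have h2 : (⅟P).mulVec (P.mulVec (b - b')) = (⅟P).mulVec (P.mulVec (A.mulVec (Q.mulVec z))) := by
      rw [h1]
    rw [Matrix.mulVec_mulVec, Matrix.mulVec_mulVec, invOf_mul_self, Matrix.one_mulVec,
      Matrix.one_mulVec] at h2
    rw [hw]; exact h2.symm
  have hAQ : (A.map (Int.cast : ℤ → ℚ)).det ≠ 0 := by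
    have : (A.map (Int.cast : ℤ → ℚ)).det = ((A.det : ℤ) : ℚ) :=
      (RingHom.map_det (Int.castRingHom ℚ) A).symm
    rw [this]
    exact_mod_cast hA
  have hcast : (A.map (Int.cast : ℤ → ℚ)).mulVec (fun i => (w i : ℚ)) =
      fun i => ((b i - b' i : ℤ) : ℚ) := by
    funext i
    have := congrFun hAw i
    simp only [Matrix.mulVec, dotProduct, Matrix.map_apply, Pi.sub_apply] at this ⊢
    push_cast
    exact_mod_cast congrArg (Int.cast : ℤ → ℚ) this
  refine ⟨w, fun j => ?_, ?_, ?_, ?_⟩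
  · rw [← hcast, Matrix.mulVec_mulVec, Matrix.nonsing_inv_mul _ (isUnit_iff_ne_zero.mpr hAQ), Matrix.one_mulVec]
  · intro x hx
    simp only [Set.mem_setOf_eq] at hx ⊢
    rw [Matrix.mulVec_sub, hAw]
    intro i
    simp only [Pi.sub_apply]
    linarith [hx i]
  · intro x _ y _ h
    simpa using congrArg (fun v => v + w) h
  · intro y hy
    refine ⟨y + w, ?_, by simp⟩
    simp only [Set.mem_setOf_eq] at hy ⊢
    rw [Matrix.mulVec_add, hAw]
    intro i
    simp only [Pi.add_apply, Pi.sub_apply]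
    linarith [hy i]
end

section
/- Let A ∈ ℤ^{m×n} with m ≥ n, let J' ⊆ {1,…,m} with |J'| = n, and let c^⊤ = Σ_{i ∈ J'} A_{i*} be the sum of the rows of A indexed by J'. Let J ⊆ {1,…,m} with |J| = n and det(A_J) ≠ 0. Then for every l ∈ {1,…,n}, the l-th entry of the row vector c^⊤ · (det(A_J) · A_J^{-1}) has absolute value at most n · Δ_n(A). -/
lemma submatrix_det_natAbs_le {m n : ℕ} (A : Matrix (Fin m) (Fin n) ℤ) (g : Fin n → Fin m) :
    (A.submatrix g id).det.natAbs ≤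
      Finset.univ.sup (fun f : Fin n ↪ Fin m => (A.submatrix f id).det.natAbs) := by
  by_cases hg : Function.Injective g
  · exact Finset.le_sup (f := fun f : Fin n ↪ Fin m => (A.submatrix f id).det.natAbs)
      (Finset.mem_univ ⟨g, hg⟩)
  · have : (A.submatrix g id).det = 0 := by
      simp only [Function.Injective, not_forall] at hg
      obtain ⟨a, b, hab, hne⟩ := hg
      exact Matrix.det_zero_of_row_eq hne (by funext j; simp [Matrix.submatrix, hab])
    simp [this]

/-- For `A ∈ ℤ^{m×n}` with `m ≥ n`, `cᵀ = Σ_{i ∈ J'} A_{i*}` a sum of `n` rows of `A`, and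
a nonsingular row-selection `A_J` (`|J| = n`), every entry of the row vector
`cᵀ · (det(A_J) · A_J⁻¹)` has absolute value at most `n · Δ_n(A)`. -/
theorem row_sum_times_adjugate_bound
    (m n : ℕ) (hmn : n ≤ m) (A : Matrix (Fin m) (Fin n) ℤ)
    (J' : Finset (Fin m)) (hJ' : J'.card = n)
    (e : Fin n ↪ Fin m) (hdet : (A.submatrix e id).det ≠ 0) :
    ∀ l : Fin n,
      |Matrix.vecMul (fun j => (((∑ i ∈ J', A i) j : ℤ) : ℚ))
          (((A.submatrix e id).det : ℚ) •
            ((A.submatrix e id).map (Int.cast : ℤ → ℚ))⁻¹) l|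
        ≤ (n : ℚ) * ((Finset.univ.sup
            fun f : Fin n ↪ Fin m => (A.submatrix f id).det.natAbs : ℕ) : ℚ) := by
  intro l
  set B : Matrix (Fin n) (Fin n) ℚ := (A.submatrix e id).map (Int.cast : ℤ → ℚ) with hB
  set Δ : ℕ := Finset.univ.sup (fun f : Fin n ↪ Fin m => (A.submatrix f id).det.natAbs)
  have hBdet : B.det = ((A.submatrix e id).det : ℚ) :=
    ((RingHom.map_det (Int.castRingHom ℚ) _)).symm
  have hBdet0 : B.det ≠ 0 := by
    rw [hBdet]; exact_mod_cast hdet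
  set c : Fin n → ℚ := fun j => (((∑ i ∈ J', A i) j : ℤ) : ℚ) with hc
  have hcsum : c = ∑ i ∈ J', (fun j => ((A i j : ℤ) : ℚ)) := by
    funext j; simp [hc, Finset.sum_apply]
    rw [← Int.cast_sum]; exact congrArg _ (Finset.sum_apply j J' (fun i => (A i : Fin n → ℤ)))
  have key : Matrix.vecMul c (((A.submatrix e id).det : ℚ) • B⁻¹) l
      = ∑ i ∈ J', ((A.submatrix (Function.update (⇑e) l i) id).det : ℚ) := by
    have hsm : Matrix.vecMul c (B.det • B⁻¹) = B.det • Matrix.vecMul c B⁻¹ := by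
      funext k
      simp [Matrix.vecMul, dotProduct, Finset.mul_sum, mul_left_comm]
    rw [← hBdet, hsm, Matrix.det_smul_inv_vecMul_eq_cramer_transpose B c
      (isUnit_iff_ne_zero.mpr hBdet0), hcsum, ← Matrix.sum_cramer, Finset.sum_apply]
    refine Finset.sum_congr rfl fun i _ => ?_
    rw [Matrix.cramer_transpose_apply]
    have : B.updateRow l (fun j => ((A i j : ℤ) : ℚ))
        = (A.submatrix (Function.update (⇑e) l i) id).map (Int.cast : ℤ → ℚ) := by
      ext k j
      rcases eq_or_ne k l with rfl | hk
      · simp [Matrix.updateRow_apply, Function.update]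
      · simp [Matrix.updateRow_apply, hk, hB, Function.update, Matrix.submatrix]
    rw [this]
    exact ((RingHom.map_det (Int.castRingHom ℚ) _)).symm
  rw [key]
  calc |∑ i ∈ J', ((A.submatrix (Function.update (⇑e) l i) id).det : ℚ)|
      ≤ ∑ i ∈ J', |((A.submatrix (Function.update (⇑e) l i) id).det : ℚ)| :=
        Finset.abs_sum_le_sum_abs _ _
    _ ≤ ∑ _i ∈ J', (Δ : ℚ) := by
        refine Finset.sum_le_sum fun i _ => ?_
        rw [← Int.cast_abs, Int.abs_eq_natAbs]
        exact_mod_cast submatrix_det_natAbs_le A (Function.update (⇑e) l i)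
    _ = (n : ℚ) * (Δ : ℚ) := by rw [Finset.sum_const, hJ', nsmul_eq_mul]
end

section
/- Let A ∈ ℤ^{n×n} with det(A) ≠ 0, let b ∈ ℤ^n, and let c ∈ ℝ^n be such that every entry of the row vector c^⊤ A^{-1} is positive. Then for every real τ > 0, the family (exp(τ·⟨c, x⟩))_{x ∈ 𝒫(A,b) ∩ ℤ^n} is summable; that is, the series Σ_{x ∈ ℤ^n, A x ≤ b} exp(τ·⟨c, x⟩) converges. -/
set_option maxHeartbeats 1000000

/-- A geometric-type series over integers bounded above is summable. -/
lemma summable_exp_le (t : ℝ) (ht : 0 < t) (B : ℤ) :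
    Summable (fun z : ℤ => if z ≤ B then Real.exp (t * z) else 0) := by
  set f : ℤ → ℝ := fun z => if z ≤ B then Real.exp (t * z) else 0 with hf
  have hinj : Function.Injective (fun k : ℕ => B - (k : ℤ)) := by
    intro a b h
    simpa using h
  rw [← hinj.summable_iff (f := f)]
  · have : (f ∘ fun k : ℕ => B - (k : ℤ)) =
        fun k : ℕ => Real.exp (t * B) * Real.exp (-t) ^ k := by
      funext k
      simp only [Function.comp, hf]
      rw [if_pos (by omega)]
      rw [← Real.exp_nat_mul, ← Real.exp_add]
      push_cast
      ring_nf
    rw [this]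
    exact (summable_geometric_of_lt_one (Real.exp_nonneg _)
      (Real.exp_lt_one_iff.mpr (by linarith))).mul_left _
  · intro z hz
    simp only [hf]
    rw [if_neg]
    intro hle
    exact hz ⟨(B - z).toNat, by show B - ((B - z).toNat : ℤ) = z; omega⟩

/-- Summability of products of summable nonnegative families over a pi type. -/
lemma summable_pi_prod : ∀ (n : ℕ) (f : Fin n → ℤ → ℝ),
    (∀ i z, 0 ≤ f i z) → (∀ i, Summable (f i)) →
    Summable (fun y : Fin n → ℤ => ∏ i, f i (y i)) := by
  intro n
  induction n with
  | zero => intro f _ _; exact Summable.of_finite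
  | succ m ih =>
    intro f hnn hs
    have heq : ((fun y : Fin (m+1) → ℤ => ∏ i, f i (y i)) ∘ (Fin.consEquiv (fun _ : Fin (m+1) => ℤ))) =
        fun p : ℤ × (Fin m → ℤ) => f 0 p.1 * ∏ i : Fin m, f i.succ (p.2 i) := by
      funext p
      simp only [Function.comp_apply, Fin.consEquiv, Equiv.coe_fn_mk]
      rw [Fin.prod_univ_succ]
      simp only [Fin.cons_zero, Fin.cons_succ]
    have hsum : Summable (fun p : ℤ × (Fin m → ℤ) => f 0 p.1 * ∏ i : Fin m, f i.succ (p.2 i)) :=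
      Summable.mul_of_nonneg (f := f 0)
        (g := fun y : Fin m → ℤ => ∏ i : Fin m, f i.succ (y i)) (hs 0)
        (ih (fun i => f i.succ) (fun i z => hnn _ _) (fun i => hs _))
        (fun z => hnn 0 z)
        (fun y => Finset.prod_nonneg fun i _ => hnn _ _)
    exact ((Fin.consEquiv (fun _ : Fin (m+1) => ℤ)).summable_iff).mp
      (hsum.congr fun p => (congrFun heq p).symm)

/-- If every entry of the row vector `cᵀ A⁻¹` is positive, then the series
`Σ_{x ∈ ℤ^n, A x ≤ b} exp(τ·⟨c, x⟩)` converges for every `τ > 0`. -/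
theorem exponential_sum_over_polyhedron_summable
    (n : ℕ) (A : Matrix (Fin n) (Fin n) ℤ) (b : Fin n → ℤ) (c : Fin n → ℝ)
    (hA : A.det ≠ 0)
    (hc : ∀ j : Fin n, 0 < Matrix.vecMul c (A.map (Int.cast : ℤ → ℝ))⁻¹ j) :
    ∀ τ : ℝ, 0 < τ →
      Summable (fun x : {x : Fin n → ℤ // A.mulVec x ≤ b} =>
        Real.exp (τ * ∑ i, c i * (x.1 i : ℝ))) := by
  intro τ hτ
  set M : Matrix (Fin n) (Fin n) ℝ := A.map (Int.cast : ℤ → ℝ) with hM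
  have hMdet : IsUnit M.det := by
    rw [hM, show A.map (Int.cast : ℤ → ℝ) = (Int.castRingHom ℝ).mapMatrix A from rfl,
      ← RingHom.map_det]
    simpa using hA
  set d : Fin n → ℝ := Matrix.vecMul c M⁻¹ with hd
  -- key identity: c ⬝ x = d ⬝ (A x)
  have hdM : Matrix.vecMul d M = c := by
    rw [hd, Matrix.vecMul_vecMul, Matrix.nonsing_inv_mul M hMdet, Matrix.vecMul_one]
  have hcast : ∀ x : Fin n → ℤ,
      M.mulVec (fun i => (x i : ℝ)) = fun j => ((A.mulVec x j : ℤ) : ℝ) := by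
    intro x
    funext j
    simp [Matrix.mulVec, dotProduct, hM, Matrix.map_apply]
  have hkey : ∀ x : Fin n → ℤ,
      (∑ i, c i * (x i : ℝ)) = ∑ j, d j * ((A.mulVec x j : ℤ) : ℝ) := by
    intro x
    have : dotProduct c (fun i => (x i : ℝ)) =
        dotProduct d (M.mulVec fun i => (x i : ℝ)) := by
      rw [Matrix.dotProduct_mulVec, hdM]
    rw [hcast] at this
    simpa [dotProduct] using this
  -- the dominating function
  set f : Fin n → ℤ → ℝ := fun j z => if z ≤ b j then Real.exp (τ * d j * z) else 0 with hfdef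
  have hg : Summable (fun y : Fin n → ℤ => ∏ j, f j (y j)) := by
    apply summable_pi_prod
    · intro i z
      simp only [hfdef]
      split <;> positivity
    · intro i
      exact summable_exp_le (τ * d i) (mul_pos hτ (hc i)) (b i)
  -- injectivity of x ↦ A x on ℤⁿ
  have hinj : Function.Injective
      (fun x : {x : Fin n → ℤ // A.mulVec x ≤ b} => A.mulVec x.1) := by
    intro x y h
    have h' : A.mulVec (x.1) = A.mulVec (y.1) := h
    have hR : M.mulVec (fun i => ((x.1 i : ℝ))) = M.mulVec (fun i => ((y.1 i : ℝ))) := by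
      rw [hcast, hcast, h']
    have hxy : (fun i => ((x.1 i : ℝ))) = fun i => ((y.1 i : ℝ)) := by
      have := congrArg (M⁻¹.mulVec ·) hR
      simpa [Matrix.mulVec_mulVec, Matrix.nonsing_inv_mul M hMdet] using this
    ext i
    exact_mod_cast congrFun hxy i
  have := hg.comp_injective hinj
  refine this.congr fun x => ?_
  symm
  simp only [Function.comp]
  rw [hkey x.1]
  rw [Finset.mul_sum, Real.exp_sum]
  apply Finset.prod_congr rfl
  intro j _
  simp only [hfdef]
  rw [if_pos (x.2 j)]
  ring_nf
end

section
/- Let A ∈ ℤ^{n×n} with Δ = |det(A)| > 0, let b ∈ ℤ^n, and let P, Q ∈ ℤ^{n×n} be unimodular matrices such that S = P A Q is diagonal with positive diagonal entries satisfying S_{11} | S_{22} | … | S_{nn}; set σ = S_{nn}. Let c ∈ ℤ^n be such that every entry of the row vector c^⊤ A^{-1} is positive, let h_i = Δ·A^{-1} e_i ∈ ℤ^n for i = 1,…,n, let χ = max_{i} ⟨c, h_i⟩, and let N = n·σ·χ. Then there exist nonnegative integers ε_i for i ∈ {−N, …, N}, integers α_i for i ∈ {−N, …, N}, and negative integers β_1,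 …, β_n, such that for every real τ > 0: Σ_{x ∈ 𝒫(A,b) ∩ ℤ^n} exp(τ·⟨c, x⟩) = (Σ_{i=−N}^{N} ε_i · exp(τ·α_i)) / (∏_{j=1}^{n} (1 − exp(τ·β_j))), the series on the left being absolutely convergent. -/
lemma simple_cone_pi_geom_aux : ∀ (n : ℕ) (r : Fin n → ℝ), (∀ j, 0 ≤ r j) → (∀ j, r j < 1) →
    Summable (fun m : Fin n → ℕ => ∏ j, r j ^ m j) ∧
    (∑' m : Fin n → ℕ, ∏ j, r j ^ m j) = ∏ j, (1 - r j)⁻¹ := by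
  intro n
  induction n with
  | zero =>
    intro r _ _
    haveI : Unique (Fin 0 → ℕ) := ⟨⟨fun i => i.elim0⟩, fun f => funext fun i => i.elim0⟩
    constructor
    · exact Summable.of_finite
    · rw [tsum_eq_single default (fun b hb => absurd (Subsingleton.elim b default) hb)]
      simp
  | succ n ih =>
    intro r h0 h1
    set e : (ℕ × (Fin n → ℕ)) ≃ (Fin (n+1) → ℕ) := Fin.consEquiv (fun _ => ℕ) with he
    have key : (fun m : Fin (n+1) → ℕ => ∏ j, r j ^ m j) ∘ e
        = (fun p : ℕ × (Fin n → ℕ) => r 0 ^ p.1 * ∏ j : Fin n, r j.succ ^ p.2 j) := by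
      funext p
      simp only [Function.comp_apply, he, Fin.consEquiv_apply]
      rw [Fin.prod_univ_succ]
      simp [Fin.cons_zero, Fin.cons_succ]
    obtain ⟨ihS, ihT⟩ := ih (fun j => r j.succ) (fun j => h0 j.succ) (fun j => h1 j.succ)
    have hg : Summable (fun k : ℕ => r 0 ^ k) := summable_geometric_of_lt_one (h0 0) (h1 0)
    have hS : Summable (fun p : ℕ × (Fin n → ℕ) => r 0 ^ p.1 * ∏ j : Fin n, r j.succ ^ p.2 j) :=
      Summable.mul_of_nonneg (f := fun k : ℕ => r 0 ^ k) (g := fun m : Fin n → ℕ => ∏ j : Fin n, r j.succ ^ m j) hg ihS (fun k => pow_nonneg (h0 0) k)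
        (fun m => Finset.prod_nonneg fun j _ => pow_nonneg (h0 j.succ) _)
    have hS' : Summable (fun m : Fin (n+1) → ℕ => ∏ j, r j ^ m j) := by
      rw [← e.summable_iff, key]; exact hS
    refine ⟨hS', ?_⟩
    rw [← e.tsum_eq]
    rw [show ∑' (p : ℕ × (Fin n → ℕ)), ∏ j : Fin (n+1), r j ^ e p j
        = ∑' (p : ℕ × (Fin n → ℕ)), r 0 ^ p.1 * ∏ j : Fin n, r j.succ ^ p.2 j
      from tsum_congr fun p => congrFun key p]
    rw [Summable.tsum_prod' (f := fun p : ℕ × (Fin n → ℕ) => r 0 ^ p.1 * ∏ j : Fin n, r j.succ ^ p.2 j) hS (fun k => ihS.mul_left (r 0 ^ k))]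
    have hk : ∀ k : ℕ, ∑' m : Fin n → ℕ, r 0 ^ k * ∏ j : Fin n, r j.succ ^ m j
        = r 0 ^ k * ∏ j : Fin n, (1 - r j.succ)⁻¹ := fun k => by rw [tsum_mul_left, ihT]
    rw [tsum_congr hk, tsum_mul_right, tsum_geometric_of_lt_one (h0 0) (h1 0),
      Fin.prod_univ_succ]

/-- Short exponential-form representation of the generating function of a simplicial
`Δ`-modular polyhedron `𝒫(A,b)` with `A ∈ ℤ^{n×n}`, `Δ = |det A| > 0`: with `S = P A Q`
the Smith Normal Form of `A`, `σ = S_{nn}`, `c` such that `cᵀA⁻¹ > 0` entrywise,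
`h_i = Δ·A⁻¹e_i`, `χ = max_i ⟨c, h_i⟩` and `N = n·σ·χ`, there are nonnegative integers
`ε_i`, integers `α_i` (`|i| ≤ N`) and negative integers `β_1, …, β_n` with
`Σ_{x ∈ 𝒫(A,b) ∩ ℤ^n} exp(τ⟨c,x⟩) = (Σ_{i=-N}^{N} ε_i e^{τα_i}) / (∏_j (1 - e^{τβ_j}))`
for every `τ > 0`, the left-hand series being absolutely convergent. -/

theorem simple_cone_exponential_representation
    (n : ℕ) (hn : 0 < n)
    (A P Q : Matrix (Fin n) (Fin n) ℤ) (b : Fin n → ℤ)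
    (hA : A.det ≠ 0) (hP : IsUnit P.det) (hQ : IsUnit Q.det)
    (hdiag : (P * A * Q).IsDiag) (hpos : ∀ i, 0 < (P * A * Q) i i)
    (hdvd : ∀ i j : Fin n, i ≤ j → (P * A * Q) i i ∣ (P * A * Q) j j)
    (σ : ℤ) (hσ : σ = (P * A * Q) ⟨n - 1, by omega⟩ ⟨n - 1, by omega⟩)
    (c : Fin n → ℤ)
    (hc : ∀ j : Fin n,
      0 < Matrix.vecMul (fun i => (c i : ℚ)) (A.map (Int.cast : ℤ → ℚ))⁻¹ j)
    (χ : ℤ)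
    (hχ : IsGreatest
      {q : ℤ | ∃ i : Fin n, (q : ℚ) =
        ∑ j, (c j : ℚ) * ((A.det.natAbs : ℚ) * (A.map (Int.cast : ℤ → ℚ))⁻¹ j i)} χ) :
    ∃ (ε : ℤ → ℕ) (α : ℤ → ℤ) (β : Fin n → ℤ),
      (∀ j, β j < 0) ∧
      ∀ τ : ℝ, 0 < τ →
        Summable (fun x : {x : Fin n → ℤ // A.mulVec x ≤ b} =>
          Real.exp (τ * ∑ i, (c i : ℝ) * (x.1 i : ℝ))) ∧
        (∑' x : {x : Fin n → ℤ // A.mulVec x ≤ b},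
            Real.exp (τ * ∑ i, (c i : ℝ) * (x.1 i : ℝ)))
          = (∑ i ∈ Finset.Icc (-((n : ℤ) * σ * χ)) ((n : ℤ) * σ * χ),
              (ε i : ℝ) * Real.exp (τ * (α i : ℝ)))
            / ∏ j, (1 - Real.exp (τ * (β j : ℝ))) := by
  classical
  set D : ℤ := (A.det.natAbs : ℤ) with hDdef
  have hD0 : 0 < D := by have := Int.natAbs_pos.mpr hA; omega
  set s : ℤ := A.det.sign with hsdef
  have hsd : s * A.det = D := by
    rcases lt_trichotomy A.det 0 with h | h | h
    · rw [hsdef, Int.sign_eq_neg_one_of_neg h, hDdef, Int.ofNat_natAbs_of_nonpos h.le]; ring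
    · exact absurd h hA
    · rw [hsdef, Int.sign_eq_one_of_pos h, hDdef, Int.natAbs_of_nonneg h.le]; ring
  set H : Matrix (Fin n) (Fin n) ℤ := s • A.adjugate with hHdef
  have hAH : A * H = D • (1 : Matrix (Fin n) (Fin n) ℤ) := by
    rw [hHdef, Matrix.mul_smul, Matrix.mul_adjugate, smul_smul, hsd]
  have hHA : H * A = D • (1 : Matrix (Fin n) (Fin n) ℤ) := by
    rw [hHdef, Matrix.smul_mul, Matrix.adjugate_mul, smul_smul, hsd]
  have hAHv : ∀ w : Fin n → ℤ, A.mulVec (H.mulVec w) = fun i => D * w i := by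
    intro w
    rw [Matrix.mulVec_mulVec, hAH]
    funext i
    simp [Matrix.smul_mulVec, Matrix.one_mulVec]
  have hHAv : ∀ w : Fin n → ℤ, H.mulVec (A.mulVec w) = fun i => D * w i := by
    intro w
    rw [Matrix.mulVec_mulVec, hHA]
    funext i
    simp [Matrix.smul_mulVec, Matrix.one_mulVec]
  have hinj : ∀ z z' : Fin n → ℤ, A.mulVec z = A.mulVec z' → z = z' := by
    intro z z' h
    funext i
    have h2 := congrArg (fun w => H.mulVec w i) h
    simp only [hHAv] at h2
    exact mul_left_cancel₀ hD0.ne' h2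
  set W : Fin n → ℤ := fun j => ∑ i, c i * H i j with hWdef
  have hinvW : ∀ j, (D : ℚ) * Matrix.vecMul (fun i => (c i : ℚ)) (A.map (Int.cast : ℤ → ℚ))⁻¹ j
      = (W j : ℚ) := by
    intro j
    have hadj : (A.map (Int.cast : ℤ → ℚ)).adjugate = (A.adjugate).map (Int.cast : ℤ → ℚ) := by
      have := (Int.castRingHom ℚ).map_adjugate A
      simpa [RingHom.mapMatrix_apply] using this.symm
    have hdet : (A.map (Int.cast : ℤ → ℚ)).det = (A.det : ℚ) := by
      have := RingHom.map_det (Int.castRingHom ℚ) A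
      simpa [RingHom.mapMatrix_apply] using this.symm
    rw [Matrix.inv_def, hadj, hdet]
    simp only [Matrix.vecMul, dotProduct, Matrix.smul_apply, Matrix.map_apply,
      smul_eq_mul, Ring.inverse_eq_inv']
    rw [hWdef]
    push_cast [Finset.mul_sum]
    refine Finset.sum_congr rfl fun i _ => ?_
    have hdq : (A.det : ℚ) ≠ 0 := Int.cast_ne_zero.mpr hA
    have hsq : (s : ℚ) * (A.det : ℚ) = (D : ℚ) := by exact_mod_cast congrArg (Int.cast : ℤ → ℚ) hsd
    have hHq : ((H i j : ℤ) : ℚ) = (s : ℚ) * (A.adjugate i j : ℚ) := by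
      simp only [hHdef, Matrix.smul_apply, smul_eq_mul]; push_cast; ring
    rw [hHq, ← hsq]
    field_simp
    rw [show (A.map fun x : ℤ => (x : ℚ)).det = (A.det : ℚ) from hdet]
    field_simp
  have hWpos : ∀ j, 0 < W j := by
    intro j
    have h1 : (0 : ℚ) < (D : ℚ) * Matrix.vecMul (fun i => (c i : ℚ))
        (A.map (Int.cast : ℤ → ℚ))⁻¹ j :=
      mul_pos (by exact_mod_cast hD0) (hc j)
    rw [hinvW j] at h1
    exact_mod_cast h1
  have hDQ : ((A.det.natAbs : ℚ)) = ((D : ℤ) : ℚ) := by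
    rw [hDdef]; exact (Int.cast_natCast _).symm
  have hsum_eq : ∀ i : Fin n,
      ∑ j, (c j : ℚ) * ((A.det.natAbs : ℚ) * (A.map (Int.cast : ℤ → ℚ))⁻¹ j i) = (W i : ℚ) := by
    intro i
    rw [← hinvW i]
    simp only [Matrix.vecMul, dotProduct]
    rw [Finset.mul_sum]
    refine Finset.sum_congr rfl fun j _ => ?_
    rw [hDQ]
    ring
  have hWmem : ∀ i : Fin n, (W i) ∈ {q : ℤ | ∃ i : Fin n, (q : ℚ) =
      ∑ j, (c j : ℚ) * ((A.det.natAbs : ℚ) * (A.map (Int.cast : ℤ → ℚ))⁻¹ j i)} :=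
    fun i => ⟨i, (hsum_eq i).symm⟩
  have hWχ : ∀ i, W i ≤ χ := fun i => hχ.2 (hWmem i)
  have hχpos : 0 < χ := by
    obtain ⟨i, hi⟩ := hχ.1
    rw [hsum_eq i] at hi
    have : χ = W i := by exact_mod_cast hi
    rw [this]; exact hWpos i
  have hσ1 : 1 ≤ σ := by rw [hσ]; exact hpos _
  set N : ℤ := (n : ℤ) * σ * χ with hNdef
  set T : ℤ := ∑ j, W j with hTdef
  have hT0 : 0 ≤ T := Finset.sum_nonneg fun j _ => (hWpos j).le
  have hTχ : T ≤ (n : ℤ) * χ := by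
    have := Finset.sum_le_card_nsmul Finset.univ W χ (fun j _ => hWχ j)
    simpa [hTdef, nsmul_eq_mul] using this
  have hTN : T ≤ N := by
    refine hTχ.trans ?_
    rw [hNdef]
    nlinarith [hχpos, hσ1, Int.ofNat_nonneg n]
  have hN0 : 0 ≤ N := hT0.trans hTN
  -- the residue set
  set R : Finset (Fin n → ℤ) :=
    (Finset.Icc (0 : Fin n → ℤ) (fun _ => D - 1)).filter
      (fun q => ∃ z : Fin n → ℤ, A.mulVec z = b - q) with hRdef
  have hRbound : ∀ q ∈ R, ∀ i, 0 ≤ q i ∧ q i ≤ D - 1 := by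
    intro q hq i
    rw [hRdef, Finset.mem_filter, Finset.mem_Icc] at hq
    exact ⟨by simpa using hq.1.1 i, by simpa using hq.1.2 i⟩
  set Z : (Fin n → ℤ) → (Fin n → ℤ) :=
    fun q => if h : ∃ z : Fin n → ℤ, A.mulVec z = b - q then h.choose else 0 with hZdef
  have hZ : ∀ q ∈ R, A.mulVec (Z q) = b - q := by
    intro q hq
    rw [hRdef, Finset.mem_filter] at hq
    rw [hZdef]
    simp only [dif_pos hq.2]
    exact hq.2.choose_spec
  set v : (Fin n → ℤ) → ℤ := fun q => ∑ i, c i * Z q i with hvdef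
  have hcHy : ∀ y : Fin n → ℤ, ∑ i, c i * H.mulVec y i = ∑ j, W j * y j := by
    intro y
    simp only [Matrix.mulVec, dotProduct, Finset.mul_sum]
    rw [Finset.sum_comm]
    refine Finset.sum_congr rfl fun j _ => ?_
    rw [hWdef, Finset.sum_mul]
    exact Finset.sum_congr rfl fun i _ => by ring
  have hDv : ∀ q ∈ R, D * v q = ∑ i, W i * (b i - q i) := by
    intro q hq
    have h1 : H.mulVec (b - q) = fun i => D * Z q i := by rw [← hZ q hq, hHAv]
    calc D * v q = ∑ i, c i * (D * Z q i) := by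
          rw [hvdef, Finset.mul_sum]; exact Finset.sum_congr rfl fun i _ => by ring
    _ = ∑ i, c i * H.mulVec (b - q) i := by rw [h1]
    _ = ∑ i, W i * (b - q) i := hcHy (b - q)
    _ = ∑ i, W i * (b i - q i) := rfl
  set B : ℤ := ∑ i, W i * b i with hBdef
  set V : ℤ := B / D with hVdef
  have hvV : ∀ q ∈ R, v q - V ∈ Finset.Icc (-N) N := by
    intro q hq
    have hDvq : D * v q = B - ∑ i, W i * q i := by
      rw [hDv q hq, hBdef, ← Finset.sum_sub_distrib]
      exact Finset.sum_congr rfl fun i _ => by ring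
    have hq0 : 0 ≤ ∑ i, W i * q i :=
      Finset.sum_nonneg fun i _ => mul_nonneg (hWpos i).le (hRbound q hq i).1
    have hq1 : ∑ i, W i * q i ≤ (D - 1) * T := by
      calc ∑ i, W i * q i ≤ ∑ i, W i * (D - 1) :=
            Finset.sum_le_sum fun i _ =>
              mul_le_mul_of_nonneg_left (hRbound q hq i).2 (hWpos i).le
      _ = (D - 1) * T := by rw [hTdef, Finset.mul_sum]; exact Finset.sum_congr rfl fun i _ => by ring
    have hvle : v q ≤ V := by
      rw [hVdef, Int.le_ediv_iff_mul_le hD0, mul_comm]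
      linarith [hq0]
    have hVD : D * V ≤ B := by
      have := Int.ediv_mul_le B hD0.ne'
      rw [hVdef]
      linarith [this]
    have hlow : V - v q ≤ N := by
      have h2 : D * (V - v q) ≤ (D - 1) * T := by
        rw [mul_sub]
        linarith [hq1]
      have h3 : (D - 1) * T ≤ D * N := by nlinarith
      have h4 : D * (V - v q) ≤ D * N := h2.trans h3
      exact le_of_mul_le_mul_left h4 hD0
    rw [Finset.mem_Icc]
    omega
  -- the data
  refine ⟨fun i => ((R.filter (fun q => v q - V = i)).card),
    fun i => V + i, fun j => -W j, fun j => by simpa using hWpos j, ?_⟩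
  intro τ hτ
  set r : Fin n → ℝ := fun j => Real.exp (τ * ((-W j : ℤ) : ℝ)) with hrdef
  have hr0 : ∀ j, 0 ≤ r j := fun j => (Real.exp_pos _).le
  have hr1 : ∀ j, r j < 1 := by
    intro j
    rw [hrdef]
    rw [Real.exp_lt_one_iff]
    have : ((-W j : ℤ) : ℝ) < 0 := by exact_mod_cast neg_neg_of_pos (hWpos j)
    exact mul_neg_of_pos_of_neg hτ this
  obtain ⟨hGsum, hGt⟩ := simple_cone_pi_geom_aux n r hr0 hr1
  -- the equivalence
  have hmemR : ∀ x : {x : Fin n → ℤ // A.mulVec x ≤ b},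
      (fun i => (b i - A.mulVec x.1 i) % D) ∈ R := by
    intro x
    rw [hRdef, Finset.mem_filter, Finset.mem_Icc]
    refine ⟨⟨fun i => Int.emod_nonneg _ hD0.ne', fun i => ?_⟩, ?_⟩
    · show (b i - A.mulVec x.1 i) % D ≤ D - 1
      have := Int.emod_lt_of_pos (b i - A.mulVec x.1 i) hD0
      omega
    · refine ⟨x.1 + H.mulVec (fun i => (b i - A.mulVec x.1 i) / D), ?_⟩
      rw [Matrix.mulVec_add, hAHv]
      funext i
      have h5 := Int.emod_add_mul_ediv (b i - A.mulVec x.1 i) D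
      simp only [Pi.add_apply, Pi.sub_apply]
      linarith [h5]
  have hg2mem : ∀ (q : Fin n → ℤ), q ∈ R → ∀ (m : Fin n → ℕ),
      A.mulVec (Z q - H.mulVec (fun i => (m i : ℤ))) ≤ b := by
    intro q hq m
    rw [Matrix.mulVec_sub, hZ q hq, hAHv]
    intro i
    simp only [Pi.sub_apply]
    have h1 := (hRbound q hq i).1
    have h2 : (0 : ℤ) ≤ (m i : ℤ) := Int.ofNat_nonneg _
    nlinarith
  set E : {x : Fin n → ℤ // A.mulVec x ≤ b} ≃ ({q // q ∈ R} × (Fin n → ℕ)) :=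
    { toFun := fun x =>
        (⟨fun i => (b i - A.mulVec x.1 i) % D, hmemR x⟩,
          fun i => ((b i - A.mulVec x.1 i) / D).toNat)
      invFun := fun p =>
        ⟨Z p.1.1 - H.mulVec (fun i => (p.2 i : ℤ)), hg2mem p.1.1 p.1.2 p.2⟩
      left_inv := by
        intro x
        apply Subtype.ext
        apply hinj
        set q : Fin n → ℤ := fun i => (b i - A.mulVec x.1 i) % D with hqdef
        have hqR : q ∈ R := hmemR x
        rw [Matrix.mulVec_sub, hZ q hqR, hAHv]
        funext i
        have h5 := Int.emod_add_mul_ediv (b i - A.mulVec x.1 i) D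
        have h6 : 0 ≤ (b i - A.mulVec x.1 i) / D := by
          exact Int.ediv_nonneg (sub_nonneg.mpr (x.2 i)) hD0.le
        have h7 : (((b i - A.mulVec x.1 i) / D).toNat : ℤ) = (b i - A.mulVec x.1 i) / D :=
          Int.toNat_of_nonneg h6
        simp only [Pi.sub_apply, h7, hqdef]
        linarith [h5]
      right_inv := by
        intro p
        obtain ⟨⟨q, hq⟩, m⟩ := p
        have hAx : A.mulVec (Z q - H.mulVec (fun i => (m i : ℤ))) = fun i => b i - (q i + D * m i) := by
          rw [Matrix.mulVec_sub, hZ q hq, hAHv]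
          funext i
          simp only [Pi.sub_apply]
          ring
        have hyq : ∀ i, b i - A.mulVec (Z q - H.mulVec (fun i => (m i : ℤ))) i = q i + D * m i := by
          intro i; rw [hAx]; ring
        refine Prod.ext (Subtype.ext (funext fun i => ?_)) (funext fun i => ?_)
        · show (b i - A.mulVec (Z q - H.mulVec (fun i => (m i : ℤ))) i) % D = q i
          rw [hyq i, Int.add_mul_emod_self_left]
          exact Int.emod_eq_of_lt (hRbound q hq i).1 (by have := (hRbound q hq i).2; omega)
        · show ((b i - A.mulVec (Z q - H.mulVec (fun i => (m i : ℤ))) i) / D).toNat = m i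
          rw [hyq i, Int.add_mul_ediv_left _ _ hD0.ne',
            Int.ediv_eq_zero_of_lt (hRbound q hq i).1 (by have := (hRbound q hq i).2; omega)]
          simp
      } with hEdef
  set F : {q // q ∈ R} → ℝ := fun q => Real.exp (τ * (v q.1 : ℝ)) with hFdef
  set G : (Fin n → ℕ) → ℝ := fun m => ∏ j, r j ^ m j with hGdef
  have hfE : ∀ p : {q // q ∈ R} × (Fin n → ℕ),
      Real.exp (τ * ∑ i, (c i : ℝ) * ((E.symm p).1 i : ℝ)) = F p.1 * G p.2 := by
    intro p
    obtain ⟨⟨q, hq⟩, m⟩ := p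
    have hx : (E.symm (⟨q, hq⟩, m)).1 = Z q - H.mulVec (fun i => (m i : ℤ)) := rfl
    have hint : ∑ i, c i * (Z q - H.mulVec (fun i => (m i : ℤ))) i
        = v q - ∑ j, W j * (m j : ℤ) := by
      rw [← hcHy (fun i => (m i : ℤ)), hvdef, ← Finset.sum_sub_distrib]
      exact Finset.sum_congr rfl fun i _ => by simp only [Pi.sub_apply]; ring
    have hreal : ∑ i, (c i : ℝ) * (((Z q - H.mulVec (fun i => (m i : ℤ))) i : ℤ) : ℝ)
        = ((v q - ∑ j, W j * (m j : ℤ) : ℤ) : ℝ) := by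
      rw [← hint]
      push_cast
      rfl
    rw [hx, hreal]
    have hsplit : τ * ((v q - ∑ j, W j * (m j : ℤ) : ℤ) : ℝ)
        = τ * (v q : ℝ) + ∑ j, (m j : ℝ) * (τ * ((-W j : ℤ) : ℝ)) := by
      push_cast
      rw [mul_sub, sub_eq_add_neg, Finset.mul_sum, ← Finset.sum_neg_distrib]
      congr 1
      exact Finset.sum_congr rfl fun j _ => by ring
    rw [hsplit, Real.exp_add, Real.exp_sum]
    rw [hFdef, hGdef]
    congr 1
    exact Finset.prod_congr rfl fun j _ => Real.exp_nat_mul _ (m j)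
  have hFGsum : Summable (fun p : {q // q ∈ R} × (Fin n → ℕ) => F p.1 * G p.2) :=
    Summable.mul_of_nonneg (f := F) (g := G) Summable.of_finite hGsum
      (fun q => (Real.exp_pos _).le) (fun m => Finset.prod_nonneg fun j _ => pow_nonneg (hr0 j) _)
  have hcomp : (fun x : {x : Fin n → ℤ // A.mulVec x ≤ b} =>
      Real.exp (τ * ∑ i, (c i : ℝ) * (x.1 i : ℝ))) ∘ E.symm
      = fun p => F p.1 * G p.2 := funext hfE
  have hfsum : Summable (fun x : {x : Fin n → ℤ // A.mulVec x ≤ b} =>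
      Real.exp (τ * ∑ i, (c i : ℝ) * (x.1 i : ℝ))) := by
    rw [← E.symm.summable_iff, hcomp]
    exact hFGsum
  refine ⟨hfsum, ?_⟩
  have hts : (∑' x : {x : Fin n → ℤ // A.mulVec x ≤ b},
      Real.exp (τ * ∑ i, (c i : ℝ) * (x.1 i : ℝ)))
      = ∑' p : {q // q ∈ R} × (Fin n → ℕ), F p.1 * G p.2 := by
    rw [← E.symm.tsum_eq]
    exact tsum_congr hfE
  rw [hts]
  rw [Summable.tsum_prod' (f := fun p : {q // q ∈ R} × (Fin n → ℕ) => F p.1 * G p.2) hFGsum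
    (fun q => hGsum.mul_left (F q))]
  have hinner : ∀ q : {q // q ∈ R}, ∑' m : Fin n → ℕ, F q * G m
      = F q * ∏ j, (1 - r j)⁻¹ := by
    intro q
    rw [tsum_mul_left]
    rw [hGdef] at hGt ⊢
    rw [hGt]
  rw [tsum_congr hinner, tsum_mul_right, tsum_fintype, Finset.sum_coe_sort R (fun q => Real.exp (τ * (v q : ℝ)))]
  -- now the finite numerator identity
  have hnum : ∑ q ∈ R, Real.exp (τ * (v q : ℝ))
      = ∑ i ∈ Finset.Icc (-N) N,
          (((R.filter (fun q => v q - V = i)).card : ℝ) * Real.exp (τ * ((V + i : ℤ) : ℝ))) := by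
    rw [← Finset.sum_fiberwise_of_maps_to hvV (fun q => Real.exp (τ * (v q : ℝ)))]
    refine Finset.sum_congr rfl fun i _ => ?_
    have : ∀ q ∈ R.filter (fun q => v q - V = i),
        Real.exp (τ * (v q : ℝ)) = Real.exp (τ * ((V + i : ℤ) : ℝ)) := by
      intro q hq
      rw [Finset.mem_filter] at hq
      congr 2
      have : v q = V + i := by omega
      exact_mod_cast congrArg (Int.cast : ℤ → ℝ) this
    rw [Finset.sum_congr rfl this, Finset.sum_const, nsmul_eq_mul]
  rw [hnum, Finset.prod_inv_distrib, ← div_eq_mul_inv]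
end
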